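/- Let K be an H-graded field and G a finite group of graded automorphisms of K with inertia subgroup I (elements acting trivially on K₁). Set F = K^I and L = K^G. Then K₁/L₁ is a finite Galois extension of fields with Galois group G/I, F₁ = K₁, and the natural map K₁ ⊗_{L₁} L → F is an isomorphism of graded L-algebras; in particular [F:L] = [K₁:L₁] = #(G/I) and e_{F/L} = 1. -/

import Mathlib

open scoped DirectSum

/-- An `H`-graded field: a nonzero commutative ring with an internal grading by the
commutative group `H` in which every nonzero homogeneous element is invertible
(with homogeneous inverse). -/
structure GradedField (H : Type*) [CommGroup H] [DecidableEq H] (K : Type*) [CommRing K] where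
  comp : H → AddSubgroup K
  one_mem : (1 : K) ∈ comp 1
  mul_mem : ∀ {g h : H} {x y : K}, x ∈ comp g → y ∈ comp h → x * y ∈ comp (g * h)
  isInternal : DirectSum.IsInternal fun h : H => comp h
  zero_ne_one : (0 : K) ≠ 1
  inv_mem : ∀ {h : H} {x : K}, x ∈ comp h → x ≠ 0 → ∃ y ∈ comp h⁻¹, x * y = 1

namespace GradedField

variable {H : Type*} [CommGroup H] [DecidableEq H] {K : Type*} [CommRing K] (F : GradedField H K)

/-- A homogeneous element. -/
def Homogeneous (x : K) : Prop := ∃ h, x ∈ F.comp h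

/-- A subring is graded if each of its elements is a sum of homogeneous elements of the
subring. -/
def IsGradedSubring (R : Subring K) : Prop :=
  ∀ x ∈ R, x ∈ AddSubgroup.closure {y : K | y ∈ R ∧ F.Homogeneous y}

/-- A graded subfield: a graded subring closed under inverses of nonzero homogeneous
elements. -/
structure IsGradedSubfield (L : Subring K) : Prop where
  graded : F.IsGradedSubring L
  inv_mem : ∀ x ∈ L, F.Homogeneous x → x ≠ 0 → Ring.inverse x ∈ L

/-- A graded valuation ring of the graded subfield `L`: a graded subring `R ⊆ L` such that
every nonzero homogeneous element of `L` lies in `R` or has its inverse in `R`. -/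
def IsGradedValRing (L R : Subring K) : Prop :=
  R ≤ L ∧ F.IsGradedSubring R ∧
    ∀ x ∈ L, F.Homogeneous x → x ≠ 0 → (x ∈ R ∨ Ring.inverse x ∈ R)

/-- The identity component `K₁`, as a subring. -/
def oneComponent : Subring K where
  carrier := F.comp 1
  one_mem' := F.one_mem
  mul_mem' := fun ha hb => by simpa using F.mul_mem ha hb
  add_mem' := fun ha hb => (F.comp 1).add_mem ha hb
  zero_mem' := (F.comp 1).zero_mem
  neg_mem' := fun ha => (F.comp 1).neg_mem ha

theorem mem_oneComponent {x : K} : x ∈ F.oneComponent ↔ x ∈ F.comp 1 := Iff.rfl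

/-- The value group `ρ(L^×) ⊆ H` of a graded subfield `L`. -/
def valueGroup (L : Subring K)
    (hL : ∀ x ∈ L, F.Homogeneous x → x ≠ 0 → Ring.inverse x ∈ L) : Subgroup H where
  carrier := {h | ∃ x ∈ F.comp h, x ≠ 0 ∧ x ∈ L}
  one_mem' := ⟨1, F.one_mem, Ne.symm F.zero_ne_one, L.one_mem⟩
  mul_mem' := by
    rintro g h ⟨x, hx, hx0, hxL⟩ ⟨y, hy, hy0, hyL⟩
    obtain ⟨x', hx', hxx'⟩ := F.inv_mem hx hx0
    obtain ⟨y', hy', hyy'⟩ := F.inv_mem hy hy0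
    refine ⟨x * y, F.mul_mem hx hy, ?_, L.mul_mem hxL hyL⟩
    intro h0
    have h1 : x * y * (x' * y') = 1 := by rw [mul_mul_mul_comm, hxx', hyy', one_mul]
    rw [h0, zero_mul] at h1
    exact F.zero_ne_one h1
  inv_mem' := by
    rintro g ⟨x, hx, hx0, hxL⟩
    obtain ⟨y, hy, hxy⟩ := F.inv_mem hx hx0
    have hu : IsUnit x := IsUnit.of_mul_eq_one y hxy
    have hyx : Ring.inverse x = y := by
      calc Ring.inverse x = Ring.inverse x * (x * y) := by rw [hxy, mul_one]
        _ = Ring.inverse x * x * y := by ring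
        _ = y := by rw [Ring.inverse_mul_cancel x hu, one_mul]
    refine ⟨y, hy, ?_, ?_⟩
    · intro h0; rw [h0, mul_zero] at hxy; exact F.zero_ne_one hxy
    · rw [← hyx]; exact hL x hxL ⟨g, hx⟩ hx0

/-- The value group `ρ(K^×)` of the whole graded field. -/
def fullValueGroup : Subgroup H :=
  F.valueGroup ⊤ (fun _ _ _ _ => Subring.mem_top _)

/-- `K₁` as a module over `L₁ = K₁ ∩ L`. -/
def oneSubmodule (L : Subring K) : Submodule ↥(F.oneComponent ⊓ L) K where
  carrier := F.comp 1
  add_mem' := fun ha hb => (F.comp 1).add_mem ha hb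
  zero_mem' := (F.comp 1).zero_mem
  smul_mem' := fun c x hx => by
    have hc : (c : K) ∈ F.comp 1 := ((Subring.mem_inf).mp c.2).1
    have := F.mul_mem hc hx
    simpa [Subring.smul_def] using this

/-- A graded automorphism: a ring automorphism preserving each graded component. -/
def IsGradedAut (σ : RingAut K) : Prop := ∀ (h : H) (x : K), x ∈ F.comp h → σ x ∈ F.comp h

end GradedField

/-- The fixed subring `K^G` of a group of ring automorphisms. -/
def fixedSubring {K : Type*} [CommRing K] (G : Subgroup (RingAut K)) : Subring K where
  carrier := {x | ∀ σ ∈ G, σ x = x}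
  one_mem' := fun σ _ => map_one σ
  mul_mem' := fun ha hb σ hσ => by rw [map_mul, ha σ hσ, hb σ hσ]
  add_mem' := fun ha hb σ hσ => by rw [map_add, ha σ hσ, hb σ hσ]
  zero_mem' := fun σ _ => map_zero σ
  neg_mem' := fun ha σ hσ => by rw [map_neg, ha σ hσ]

theorem mem_fixedSubring {K : Type*} [CommRing K] {G : Subgroup (RingAut K)} {x : K} :
    x ∈ fixedSubring G ↔ ∀ σ ∈ G, σ x = x := Iff.rfl


namespace GradedField

variable {H : Type*} [CommGroup H] [DecidableEq H] {K : Type*} [CommRing K]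
variable (F : GradedField H K)

/-- Decomposition of an element into its homogeneous components. -/
noncomputable def decompose (x : K) : ⨁ h : H, ↥(F.comp h) :=
  (Equiv.ofBijective _ F.isInternal).symm x

/-- The degree-`h` homogeneous component of `x`. -/
noncomputable def component (h : H) (x : K) : K := (F.decompose x h : K)

/-- The inertia subgroup of `G`: graded automorphisms in `G` acting trivially on `K₁`. -/
def inertia (G : Subgroup (RingAut K)) : Subgroup (RingAut K) where
  carrier := {σ | σ ∈ G ∧ ∀ x ∈ F.comp 1, σ x = x}
  one_mem' := ⟨G.one_mem, fun _ _ => rfl⟩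
  mul_mem' := fun {a b} ha hb => ⟨G.mul_mem ha.1 hb.1, fun x hx => by
    show a (b x) = x
    rw [hb.2 x hx, ha.2 x hx]⟩
  inv_mem' := fun {a} ha => ⟨G.inv_mem ha.1, fun x hx => by
    conv_lhs => rw [← ha.2 x hx]
    exact a.symm_apply_apply x⟩

theorem mem_inertia {G : Subgroup (RingAut K)} {σ : RingAut K} :
    σ ∈ F.inertia G ↔ σ ∈ G ∧ ∀ x ∈ F.comp 1, σ x = x := Iff.rfl

end GradedField

/-- A subring `S` containing a subring `L`, viewed as an `L`-submodule of the ambient ring. -/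
def Subring.toSubmoduleOver {K : Type*} [CommRing K] (L S : Subring K) (hLS : L ≤ S) :
    Submodule ↥L K where
  carrier := S
  add_mem' := fun ha hb => S.add_mem ha hb
  zero_mem' := S.zero_mem
  smul_mem' := fun c x hx => S.mul_mem (hLS c.2) hx

section ZR

variable {H : Type*} [CommGroup H] [DecidableEq H] {K : Type*} [CommRing K]

/-- The Zariski–Riemann space of graded valuation rings of `K` containing `k₀`. -/
def GradedField.ZR (F : GradedField H K) (k₀ : Subring K) : Type _ :=
  {O : Subring K // F.IsGradedValRing ⊤ O ∧ k₀ ≤ O}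

/-- The set of homogeneous units (nonzero homogeneous elements) of `K`. -/
def GradedField.HomogUnits (F : GradedField H K) : Type _ :=
  {x : K // x ≠ 0 ∧ F.Homogeneous x}

open Classical in
/-- The embedding of the Zariski–Riemann space into `{0,1}^{K^×}` via characteristic
functions. -/
noncomputable def GradedField.chi (F : GradedField H K) (k₀ : Subring K) (O : F.ZR k₀) :
    F.HomogUnits → Bool :=
  fun x => decide (x.1 ∈ O.1)

/-- Basic open sets `P{F}∖{G}` of the constructible topology, for finite sets `F`, `G` of
homogeneous units. -/
def GradedField.constructibleBasis (F : GradedField H K) (k₀ : Subring K) :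
    Set (Set (F.ZR k₀)) :=
  {s | ∃ Fs Gs : Finset K, (∀ a ∈ Fs, a ≠ 0 ∧ F.Homogeneous a) ∧
    (∀ b ∈ Gs, b ≠ 0 ∧ F.Homogeneous b) ∧
    s = {O : F.ZR k₀ | (∀ a ∈ Fs, a ∈ O.1) ∧ ∀ b ∈ Gs, b ∉ O.1}}

/-- The constructible topology on the Zariski–Riemann space. -/
def GradedField.constructibleTop (F : GradedField H K) (k₀ : Subring K) :
    TopologicalSpace (F.ZR k₀) :=
  TopologicalSpace.generateFrom (F.constructibleBasis k₀)


section Aux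

namespace GradedField

variable {H : Type*} [CommGroup H] [DecidableEq H] {K : Type*} [CommRing K] (F : GradedField H K)

/-- The decomposition as an additive equivalence. -/
noncomputable def decomposeAdd : K ≃+ ⨁ h : H, ↥(F.comp h) :=
  (AddEquiv.ofBijective (DirectSum.coeAddMonoidHom fun h : H => F.comp h) F.isInternal).symm

theorem component_def (h : H) (x : K) : F.component h x = ((F.decomposeAdd x) h : K) := rfl

theorem component_mem (h : H) (x : K) : F.component h x ∈ F.comp h := (F.decompose x h).2

theorem decomposeAdd_apply_of_mem {h : H} {x : K} (hx : x ∈ F.comp h) :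
    F.decomposeAdd x = DirectSum.of (fun h : H => ↥(F.comp h)) h ⟨x, hx⟩ := by
  rw [decomposeAdd, AddEquiv.symm_apply_eq]
  show x = DirectSum.coeAddMonoidHom (fun h : H => F.comp h) (DirectSum.of _ h ⟨x, hx⟩)
  rw [DirectSum.coeAddMonoidHom_of]

theorem component_of_mem {h : H} {x : K} (hx : x ∈ F.comp h) (g : H) :
    F.component g x = if g = h then x else 0 := by
  rw [component_def, F.decomposeAdd_apply_of_mem hx]
  rcases eq_or_ne g h with rfl | hgh
  · rw [if_pos rfl, DirectSum.of_eq_same]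
  · rw [if_neg hgh, DirectSum.of_eq_of_ne _ _ _ hgh]
    rfl

/-- The degree-`h` component as an additive monoid hom. -/
noncomputable def componentHom (h : H) : K →+ K :=
  ((F.comp h).subtype).comp ((DFinsupp.evalAddMonoidHom h).comp F.decomposeAdd.toAddMonoidHom)

theorem componentHom_apply (h : H) (x : K) : F.componentHom h x = F.component h x := rfl

theorem component_finset_sum {ι : Type*} (s : Finset ι) (f : ι → K) (g : H) :
    F.component g (∑ i ∈ s, f i) = ∑ i ∈ s, F.component g (f i) := by
  simpa only [componentHom_apply] using map_sum (F.componentHom g) f s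

theorem component_zero (g : H) : F.component g (0 : K) = 0 := by
  simpa only [componentHom_apply] using map_zero (F.componentHom g)

theorem component_sum (s : Finset H) (f : H → K) (hf : ∀ h ∈ s, f h ∈ F.comp h) (g : H) :
    F.component g (∑ h ∈ s, f h) = if g ∈ s then f g else 0 := by
  classical
  rw [component_finset_sum]
  by_cases hg : g ∈ s
  · rw [if_pos hg]
    rw [Finset.sum_eq_single_of_mem g hg]
    · rw [F.component_of_mem (hf g hg), if_pos rfl]
    · intro b hb hbg
      rw [F.component_of_mem (hf b hb), if_neg hbg.symm]
  · rw [if_neg hg]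
    refine Finset.sum_eq_zero fun b hb => ?_
    rw [F.component_of_mem (hf b hb), if_neg]
    rintro rfl; exact hg hb

theorem exists_sum_component (x : K) :
    ∃ s : Finset H, x = (∑ h ∈ s, F.component h x) ∧ ∀ h ∉ s, F.component h x = 0 := by
  classical
  refine ⟨(F.decomposeAdd x).support, ?_, ?_⟩
  · have h0 : ∑ i ∈ (F.decomposeAdd x).support,
        DirectSum.of (fun h : H => ↥(F.comp h)) i (F.decomposeAdd x i) = F.decomposeAdd x :=
      DirectSum.sum_support_of _
    calc x = DirectSum.coeAddMonoidHom (fun h : H => F.comp h) (F.decomposeAdd x) :=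
          ((AddEquiv.ofBijective _ F.isInternal).apply_symm_apply x).symm
      _ = ∑ h ∈ (F.decomposeAdd x).support, F.component h x := by
          conv_lhs => rw [← h0]
          rw [map_sum]
          exact Finset.sum_congr rfl fun h _ => by rw [DirectSum.coeAddMonoidHom_of]; rfl
  · intro h hh
    rw [component_def, DFinsupp.notMem_support_iff.mp hh]
    rfl

theorem component_aut (σ : RingAut K) (hσ : F.IsGradedAut σ) (h : H) (x : K) :
    F.component h (σ x) = σ (F.component h x) := by
  obtain ⟨s, hx, hx0⟩ := F.exists_sum_component x
  have hσx : σ x = ∑ g ∈ s, σ (F.component g x) := by rw [← map_sum]; exact congrArg σ hx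
  rw [hσx, F.component_sum s _ (fun g _ => hσ g _ (F.component_mem g x))]
  by_cases hhs : h ∈ s
  · rw [if_pos hhs]
  · rw [if_neg hhs, hx0 h hhs, map_zero]

theorem component_mul_right {b : K} (hb : b ∈ F.comp 1) (h : H) (x : K) :
    F.component h (x * b) = F.component h x * b := by
  obtain ⟨s, hx, hx0⟩ := F.exists_sum_component x
  have hxb : x * b = ∑ g ∈ s, F.component g x * b := by
    conv_lhs => rw [hx]
    rw [Finset.sum_mul]
  have hmem : ∀ g ∈ s, F.component g x * b ∈ F.comp g := fun g _ => by
    have := F.mul_mem (F.component_mem g x) hb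
    rwa [mul_one] at this
  rw [hxb, F.component_sum s _ hmem]
  by_cases hhs : h ∈ s
  · rw [if_pos hhs]
  · rw [if_neg hhs, hx0 h hhs, zero_mul]

theorem oneComponent_isField : IsField ↥F.oneComponent where
  exists_pair_ne := ⟨0, 1, fun e => F.zero_ne_one (congrArg Subtype.val e)⟩
  mul_comm := mul_comm
  mul_inv_cancel := by
    intro a ha
    obtain ⟨y, hy, hxy⟩ := F.inv_mem (F.mem_oneComponent.mp a.2) (fun e => ha (Subtype.ext e))
    rw [inv_one] at hy
    exact ⟨⟨y, hy⟩, Subtype.ext hxy⟩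

/-- `K₁` as a field. -/
@[reducible]
noncomputable def oneField : Field ↥F.oneComponent := F.oneComponent_isField.toField

/-- Restriction of graded automorphisms in `G` to the identity component. -/
def restrictHom (G : Subgroup (RingAut K)) (hG : ∀ σ ∈ G, F.IsGradedAut σ) :
    ↥G →* RingAut ↥F.oneComponent where
  toFun σ :=
    { toFun := fun a => ⟨σ.1 (a : K), hG σ.1 σ.2 1 a a.2⟩
      invFun := fun a => ⟨σ.1⁻¹ (a : K), hG σ.1⁻¹ (G.inv_mem σ.2) 1 a a.2⟩
      left_inv := fun a => Subtype.ext (σ.1.symm_apply_apply (a : K))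
      right_inv := fun a => Subtype.ext (σ.1.apply_symm_apply (a : K))
      map_mul' := fun a b => Subtype.ext (map_mul σ.1 (a : K) (b : K))
      map_add' := fun a b => Subtype.ext (map_add σ.1 (a : K) (b : K)) }
  map_one' := by ext a; rfl
  map_mul' := fun σ τ => by ext a; rfl

theorem inertia_le (G : Subgroup (RingAut K)) : F.inertia G ≤ G := fun _ hσ => hσ.1

theorem mem_fixedSubring_of_mul_eq_one {G : Subgroup (RingAut K)} {c u : K}
    (hc : c ∈ fixedSubring G) (hcu : c * u = 1) : u ∈ fixedSubring G := fun σ hσ => by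
  have h1 : c * σ u = 1 := by
    have h2 := congrArg σ hcu
    rwa [map_mul, map_one, hc σ hσ] at h2
  have h3 : σ u = σ u * (c * u) := by rw [hcu, mul_one]
  have h4 : σ u * (c * u) = (c * σ u) * u := by ring
  rw [h3, h4, h1, one_mul]

end GradedField

end Aux
namespace GradedField

variable {H : Type*} [CommGroup H] [DecidableEq H] {K : Type*} [CommRing K] (F : GradedField H K)

theorem exists_fixed_homogeneous (G : Subgroup (RingAut K)) [Finite ↥G]
    (hG : ∀ σ ∈ G, F.IsGradedAut σ) {h : H} {x : K} (hx : x ∈ F.comp h) (hx0 : x ≠ 0)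
    (hfix : ∀ σ ∈ F.inertia G, σ x = x) :
    ∃ y ∈ F.comp h, y ≠ 0 ∧ y ∈ fixedSubring G := by
  classical
  letI : Field ↥F.oneComponent := F.oneField
  set r := F.restrictHom G hG with hr
  set G' := r.range with hG'
  haveI : Finite ↥G' := Finite.of_surjective _ r.rangeRestrict_surjective
  haveI : Fintype ↥G' := Fintype.ofFinite _
  have hsec : ∀ g' : ↥G', ∃ σ : ↥G, r σ = (g' : RingAut ↥F.oneComponent) := fun g' => g'.2
  choose s hs using hsec
  -- well-definedness of σ ↦ σ (x * z) on cosets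
  have hwd : ∀ (σ τ : ↥G), r σ = r τ → ∀ z ∈ F.comp 1,
      (σ : RingAut K) (x * z) = (τ : RingAut K) (x * z) := by
    intro σ τ hστ z hz
    have hfix1 : ∀ a, a ∈ F.comp 1 → ((τ⁻¹ * σ : ↥G) : RingAut K) a = a := by
      intro a ha
      have h1 : r (τ⁻¹ * σ) = 1 := by rw [map_mul, map_inv, hστ, inv_mul_cancel]
      have h2 := congrArg (fun e : RingAut ↥F.oneComponent => (e ⟨a, ha⟩ : K)) h1
      exact h2
    have hυI : ((τ⁻¹ * σ : ↥G) : RingAut K) ∈ F.inertia G := ⟨(τ⁻¹ * σ : ↥G).2, hfix1⟩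
    have h3 : ((τ⁻¹ * σ : ↥G) : RingAut K) (x * z) = x * z := by
      rw [map_mul, hfix _ hυI, hfix1 z hz]
    have h4 : ((τ * (τ⁻¹ * σ) : ↥G) : RingAut K) (x * z) =
        (τ : RingAut K) (((τ⁻¹ * σ : ↥G) : RingAut K) (x * z)) := rfl
    rw [mul_inv_cancel_left] at h4
    rw [h4, h3]
  set b : ↥F.oneComponent → K := fun a => ∑ g' : ↥G', ((s g' : ↥G) : RingAut K) (x * (a : K))
    with hb
  have hxa : ∀ a : ↥F.oneComponent, x * (a : K) ∈ F.comp h := by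
    intro a
    have := F.mul_mem hx a.2
    rwa [mul_one] at this
  have hbmem : ∀ a, b a ∈ F.comp h := fun a =>
    AddSubgroup.sum_mem _ fun g' _ => hG _ (s g').2 h _ (hxa a)
  have hbfix : ∀ a, ∀ σ ∈ G, σ (b a) = b a := by
    intro a σ hσ
    have hg₀ : r ⟨σ, hσ⟩ ∈ G' := ⟨⟨σ, hσ⟩, rfl⟩
    set g₀ : ↥G' := ⟨r ⟨σ, hσ⟩, hg₀⟩ with hg0
    calc σ (b a) = ∑ g' : ↥G', ((s (g₀ * g') : ↥G) : RingAut K) (x * (a : K)) := by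
          rw [hb, map_sum]
          refine Finset.sum_congr rfl fun g' _ => ?_
          have h5 : σ (((s g' : ↥G) : RingAut K) (x * (a : K))) =
              ((⟨σ, hσ⟩ * s g' : ↥G) : RingAut K) (x * (a : K)) := rfl
          rw [h5]
          refine hwd _ _ ?_ _ a.2
          rw [map_mul, hs, hs]
          rfl
      _ = b a := Fintype.sum_equiv (Equiv.mulLeft g₀)
            (fun g' => ((s (g₀ * g') : ↥G) : RingAut K) (x * (a : K)))
            (fun g' => ((s g' : ↥G) : RingAut K) (x * (a : K))) (fun g' => rfl) |>.symm ▸ rfl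
  have hbne : ∃ a : ↥F.oneComponent, b a ≠ 0 := by
    by_contra hcon
    push_neg at hcon
    obtain ⟨u, hu, hxu⟩ := F.inv_mem hx hx0
    have hDmem : ∀ g' : ↥G', ((s g' : ↥G) : RingAut K) x * u ∈ F.oneComponent := by
      intro g'
      have := F.mul_mem (hG _ (s g').2 h x hx) hu
      rw [mul_inv_cancel] at this
      exact F.mem_oneComponent.mpr this
    set D : ↥G' → ↥F.oneComponent := fun g' => ⟨((s g' : ↥G) : RingAut K) x * u, hDmem g'⟩
      with hD
    have hD0 : ∀ g', D g' ≠ 0 := by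
      intro g' he
      have h6 : ((s g' : ↥G) : RingAut K) x * u = 0 := congrArg Subtype.val he
      have h8 : ((s g' : ↥G) : RingAut K) x * ((s g' : ↥G) : RingAut K) u = 1 := by
        rw [← map_mul, hxu, map_one]
      have h7 : (((s g' : ↥G) : RingAut K) x * u) * (((s g' : ↥G) : RingAut K) u * x) = 1 := by
        calc (((s g' : ↥G) : RingAut K) x * u) * (((s g' : ↥G) : RingAut K) u * x)
            = (((s g' : ↥G) : RingAut K) x * ((s g' : ↥G) : RingAut K) u) * (x * u) := by ring
          _ = 1 := by rw [h8, hxu, mul_one]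
      rw [h6, zero_mul] at h7
      exact F.zero_ne_one h7
    have h10 : ∀ g' : ↥G', ∀ a : ↥F.oneComponent,
        (((g' : RingAut ↥F.oneComponent) a : ↥F.oneComponent) : K) =
          ((s g' : ↥G) : RingAut K) (a : K) := by
      intro g' a
      rw [← hs g']
      rfl
    have hrel : ∀ a : ↥F.oneComponent,
        ∑ g' : ↥G', D g' * ((g' : RingAut ↥F.oneComponent) a) = 0 := by
      intro a
      apply Subtype.ext
      have h9 := map_sum (F.oneComponent.subtype)
        (fun g' : ↥G' => D g' * ((g' : RingAut ↥F.oneComponent) a)) Finset.univ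
      refine h9.trans ?_
      have h11 : ∀ g' : ↥G',
          F.oneComponent.subtype (D g' * ((g' : RingAut ↥F.oneComponent) a)) =
            (((s g' : ↥G) : RingAut K) (x * (a : K))) * u := by
        intro g'
        show (↑(D g') * ↑((g' : RingAut ↥F.oneComponent) a) : K) = _
        rw [h10 g' a, hD]
        show (((s g' : ↥G) : RingAut K) x * u) * ((s g' : ↥G) : RingAut K) (a : K) = _
        rw [map_mul]
        ring
      rw [Finset.sum_congr rfl fun g' _ => h11 g', ← Finset.sum_mul]
      have hba : (∑ g' : ↥G', ((s g' : ↥G) : RingAut K) (x * (a : K))) = b a := rfl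
      rw [hba, hcon a, zero_mul]
      rfl
    -- linear independence of characters
    have hinj : Function.Injective
        (fun g' : ↥G' => ((g' : RingAut ↥F.oneComponent) : ↥F.oneComponent ≃* ↥F.oneComponent).toMonoidHom) := by
      intro g₁ g₂ he
      refine Subtype.ext (RingEquiv.ext fun a => ?_)
      exact DFunLike.congr_fun he a
    have hli := (linearIndependent_monoidHom ↥F.oneComponent ↥F.oneComponent).comp
      (fun g' : ↥G' => ((g' : RingAut ↥F.oneComponent) : ↥F.oneComponent ≃* ↥F.oneComponent).toMonoidHom)
      hinj
    have hall := Fintype.linearIndependent_iff.mp hli D ?_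
    · exact hD0 1 (hall 1)
    · funext a
      rw [Finset.sum_apply, Pi.zero_apply]
      simp only [Pi.smul_apply, smul_eq_mul, Function.comp]
      exact hrel a
  obtain ⟨a, ha⟩ := hbne
  exact ⟨b a, hbmem a, ha, fun σ hσ => hbfix a σ hσ⟩

end GradedField

set_option maxHeartbeats 1000000 in
set_option synthInstance.maxHeartbeats 200000 in
/-- Let `K` be an `H`-graded field, `G` a finite group of graded automorphisms with inertia
subgroup `I`, `F' = K^I` and `L = K^G`.  Then `K₁/L₁` is a finite Galois extension with
Galois group `G/I` (the fixed field of the `G`-action on `K₁` is `L₁` and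
`[K₁:L₁] = #(G/I)`), `F'₁ = K₁`, and the natural map `K₁ ⊗_{L₁} L → F'` is an isomorphism
of graded `L`-algebras: `e_{F'/L} = 1`, `[F':L] = [K₁:L₁]`, and `F'` is generated as a ring
by `K₁` and `L`. -/
theorem GradedField.fixed_inertia_structure {H : Type*} [CommGroup H] [DecidableEq H]
    {K : Type*} [CommRing K] (F : GradedField H K) (G : Subgroup (RingAut K)) [Finite G]
    (hG : ∀ σ ∈ G, F.IsGradedAut σ) :
    -- `G` acts on `K₁`, with fixed field `L₁` and kernel `I`; `[K₁:L₁] = #(G/I)`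
    (∀ σ ∈ G, ∀ x ∈ F.oneComponent, σ x ∈ F.oneComponent) ∧
    (∀ x ∈ F.oneComponent, (∀ σ ∈ G, σ x = x) → x ∈ fixedSubring G) ∧
    Module.rank ↥(F.oneComponent ⊓ fixedSubring G) ↥(F.oneSubmodule (fixedSubring G)) =
      (Nat.card G / Nat.card (F.inertia G) : ℕ) ∧
    -- `F'₁ = K₁`
    F.oneComponent ≤ fixedSubring (F.inertia G) ∧
    -- `e_{F'/L} = 1`
    (∀ h : H, (∃ x ∈ F.comp h, x ≠ 0 ∧ x ∈ fixedSubring (F.inertia G)) ↔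
      ∃ x ∈ F.comp h, x ≠ 0 ∧ x ∈ fixedSubring G) ∧
    -- `[F':L] = [K₁:L₁]`
    Module.rank ↥(fixedSubring G)
        ↥(Subring.toSubmoduleOver (fixedSubring G) (fixedSubring (F.inertia G))
          (fun _ hx σ hσ => hx σ hσ.1)) =
      Module.rank ↥(F.oneComponent ⊓ fixedSubring G) ↥(F.oneSubmodule (fixedSubring G)) ∧
    -- the natural map `K₁ ⊗_{L₁} L → F'` is onto: `F'` is generated by `K₁` and `L`
    ∀ x ∈ fixedSubring (F.inertia G),
      x ∈ Subring.closure ((F.oneComponent : Set K) ∪ (fixedSubring G : Set K)) := by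
  classical
  letI : Field ↥F.oneComponent := F.oneField
  set r := F.restrictHom G hG with hr
  set G' := r.range with hG'def
  haveI : Finite ↥G' := Finite.of_surjective _ r.rangeRestrict_surjective
  haveI : Fintype ↥G' := Fintype.ofFinite _
  haveI : Finite ↥(F.inertia G) :=
    Finite.of_equiv _ (Subgroup.subgroupOfEquivOfLe (F.inertia_le G)).toEquiv
  letI : MulSemiringAction ↥G' ↥F.oneComponent := MulSemiringAction.compHom _ G'.subtype
  haveI : FaithfulSMul ↥G' ↥F.oneComponent :=
    ⟨fun {σ τ} hστ => Subtype.ext (RingEquiv.ext fun a => hστ a)⟩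
  set E := FixedPoints.subfield ↥G' ↥F.oneComponent with hEdef
  -- the fixed field corresponds to `L₁`
  have hE : ∀ a : ↥F.oneComponent, a ∈ E ↔ (a : K) ∈ fixedSubring G := by
    intro a
    constructor
    · intro ha σ hσ
      have h1 : (⟨r ⟨σ, hσ⟩, ⟨⟨σ, hσ⟩, rfl⟩⟩ : ↥G') • a = a := ha _
      exact congrArg Subtype.val h1
    · intro ha g'
      obtain ⟨σ, hσ⟩ := g'.2
      refine Subtype.ext ?_
      show (((g' : RingAut ↥F.oneComponent) a : ↥F.oneComponent) : K) = (a : K)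
      rw [← hσ]
      exact ha σ.1 σ.2
  -- cardinality of `G'`
  have hker : r.ker = (F.inertia G).subgroupOf G := by
    ext σ
    rw [MonoidHom.mem_ker, Subgroup.mem_subgroupOf]
    constructor
    · intro hσ
      refine ⟨σ.2, fun a ha => ?_⟩
      exact congrArg (fun e : RingAut ↥F.oneComponent => (e ⟨a, ha⟩ : K)) hσ
    · intro hσ
      exact RingEquiv.ext fun a => Subtype.ext (hσ.2 (a : K) a.2)
  have hcard1 : Nat.card ↥G = Nat.card ↥G' * Nat.card ↥(F.inertia G) := by
    rw [Subgroup.card_eq_card_quotient_mul_card_subgroup r.ker]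
    congr 1
    · exact Nat.card_congr (QuotientGroup.quotientKerEquivRange r).toEquiv
    · rw [hker]
      exact Nat.card_congr (Subgroup.subgroupOfEquivOfLe (F.inertia_le G)).toEquiv
  have hquot : Nat.card ↥G / Nat.card ↥(F.inertia G) = Nat.card ↥G' := by
    rw [hcard1, Nat.mul_div_cancel _ Nat.card_pos]
  set n := Module.finrank E ↥F.oneComponent with hn
  have hncard : n = Fintype.card ↥G' := @FixedPoints.finrank_eq_card ↥G' ↥F.oneComponent _ _ _ _
    ⟨fun {σ τ} hστ => Subtype.ext (RingEquiv.ext fun a => hστ a)⟩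
  set B : Module.Basis (Fin n) E ↥F.oneComponent := Module.finBasis E ↥F.oneComponent with hB
  -- the basis of `K₁` over `L₁`
  haveI : Nontrivial ↥(F.oneComponent ⊓ fixedSubring G) :=
    ⟨0, 1, fun e => F.zero_ne_one (congrArg Subtype.val e)⟩
  haveI : Nontrivial ↥(fixedSubring G) :=
    ⟨0, 1, fun e => F.zero_ne_one (congrArg Subtype.val e)⟩
  set v : Fin n → ↥(F.oneSubmodule (fixedSubring G)) := fun i => ⟨(B i : K), (B i).2⟩ with hv
  have hli_v : LinearIndependent ↥(F.oneComponent ⊓ fixedSubring G) v := by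
    rw [linearIndependent_iff']
    intro t g hsum i hi
    have h1 : (∑ i ∈ t, ((g i : K) * (B i : K))) = 0 := by
      calc ∑ i ∈ t, ((g i : K) * (B i : K))
          = ∑ i ∈ t, ((g i • v i : ↥(F.oneSubmodule (fixedSubring G))) : K) :=
            Finset.sum_congr rfl fun i _ => rfl
        _ = 0 := by rw [← AddSubmonoidClass.coe_finset_sum, hsum]; rfl
    set g' : Fin n → ↥E := fun i => ⟨⟨(g i : K), (Subring.mem_inf.mp (g i).2).1⟩,
      (hE _).mpr (Subring.mem_inf.mp (g i).2).2⟩ with hg'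
    have h3 : (∑ i ∈ t, g' i • B i) = 0 := by
      apply Subtype.ext
      calc ((∑ i ∈ t, g' i • B i : ↥F.oneComponent) : K)
          = ∑ i ∈ t, (((g' i • B i : ↥F.oneComponent)) : K) :=
            AddSubmonoidClass.coe_finset_sum _ _
        _ = ∑ i ∈ t, ((g i : K) * (B i : K)) := Finset.sum_congr rfl fun i _ => rfl
        _ = 0 := h1
    have h6 := linearIndependent_iff'.mp B.linearIndependent t g' h3 i hi
    exact Subtype.ext (congrArg (fun w : ↥E => ((w : ↥F.oneComponent) : K)) h6)
  have hsp_v : ⊤ ≤ Submodule.span ↥(F.oneComponent ⊓ fixedSubring G) (Set.range v) := by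
    intro z _
    set a : ↥F.oneComponent := ⟨z.1, z.2⟩ with ha
    set c : Fin n → ↥(F.oneComponent ⊓ fixedSubring G) := fun i =>
      ⟨((B.repr a i : ↥F.oneComponent) : K),
        Subring.mem_inf.mpr ⟨(B.repr a i : ↥F.oneComponent).2, (hE _).mp (B.repr a i).2⟩⟩
      with hc
    have hz : z = ∑ i, c i • v i := by
      apply Subtype.ext
      have h6 := congrArg (fun w : ↥F.oneComponent => (w : K)) (B.sum_repr a)
      calc (z : K) = ((∑ i : Fin n, B.repr a i • B i : ↥F.oneComponent) : K) := h6.symm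
        _ = ∑ i : Fin n, ((B.repr a i • B i : ↥F.oneComponent) : K) :=
            AddSubmonoidClass.coe_finset_sum _ _
        _ = ∑ i : Fin n, ((c i • v i : ↥(F.oneSubmodule (fixedSubring G))) : K) :=
            Finset.sum_congr rfl fun i _ => rfl
        _ = ((∑ i : Fin n, c i • v i : ↥(F.oneSubmodule (fixedSubring G))) : K) :=
            (AddSubmonoidClass.coe_finset_sum _ _).symm
    rw [hz]
    exact Submodule.sum_mem _ fun i _ => Submodule.smul_mem _ _
      (Submodule.subset_span ⟨i, rfl⟩)
  set bv : Module.Basis (Fin n) ↥(F.oneComponent ⊓ fixedSubring G) ↥(F.oneSubmodule (fixedSubring G)) :=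
    Module.Basis.mk hli_v hsp_v with hbv
  have hrank_v : Module.rank ↥(F.oneComponent ⊓ fixedSubring G)
      ↥(F.oneSubmodule (fixedSubring G)) = n := by
    rw [rank_eq_card_basis bv, Fintype.card_fin]
  have hrank3 : Module.rank ↥(F.oneComponent ⊓ fixedSubring G)
      ↥(F.oneSubmodule (fixedSubring G)) =
      ((Nat.card ↥G / Nat.card ↥(F.inertia G) : ℕ) : Cardinal) := by
    rw [hrank_v, hquot, hncard, Nat.card_eq_fintype_card]
  set Wsub := Subring.toSubmoduleOver (fixedSubring G) (fixedSubring (F.inertia G))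
      (fun _ hx σ hσ => hx σ hσ.1) with hWsub
  have hBW : ∀ i : Fin n, (B i : K) ∈ fixedSubring (F.inertia G) :=
    fun i σ hσ => hσ.2 _ (B i).2
  set w : Fin n → ↥Wsub := fun i => ⟨(B i : K), hBW i⟩ with hw
  have hli_w : LinearIndependent ↥(fixedSubring G) w := by
    rw [linearIndependent_iff']
    intro t g hsum i hi
    have h1 : (∑ i ∈ t, ((g i : K) * (B i : K))) = 0 := by
      calc ∑ i ∈ t, ((g i : K) * (B i : K))
          = ∑ i ∈ t, ((g i • w i : ↥Wsub) : K) := Finset.sum_congr rfl fun i _ => rfl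
        _ = 0 := by rw [← AddSubmonoidClass.coe_finset_sum, hsum]; rfl
    have hcfix : ∀ h : H, ∀ j, F.component h ((g j : K)) ∈ fixedSubring G := by
      intro h j σ hσ
      rw [← F.component_aut σ (hG σ hσ) h, (g j).2 σ hσ]
    have hcomp : ∀ h : H, ∑ j ∈ t, F.component h ((g j : K)) * (B j : K) = 0 := by
      intro h
      have h2 := congrArg (F.component h) h1
      rw [F.component_finset_sum, F.component_zero] at h2
      calc ∑ j ∈ t, F.component h ((g j : K)) * (B j : K)
          = ∑ j ∈ t, F.component h ((g j : K) * (B j : K)) :=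
            Finset.sum_congr rfl fun j _ => (F.component_mul_right (B j).2 h _).symm
        _ = 0 := h2
    have hczero : ∀ h : H, ∀ j ∈ t, F.component h ((g j : K)) = 0 := by
      intro h
      by_contra hcontra
      push_neg at hcontra
      obtain ⟨j, hjt, hj0⟩ := hcontra
      obtain ⟨u, hu, hju⟩ := F.inv_mem (F.component_mem h ((g j : K))) hj0
      have huL : u ∈ fixedSubring G := mem_fixedSubring_of_mul_eq_one (hcfix h j) hju
      have hmem1 : ∀ k', F.component h ((g k' : K)) * u ∈ F.comp 1 := fun k' => by
        have := F.mul_mem (F.component_mem h ((g k' : K))) hu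
        rwa [mul_inv_cancel] at this
      set d : Fin n → ↥(F.oneComponent ⊓ fixedSubring G) := fun k' =>
        ⟨F.component h ((g k' : K)) * u,
          Subring.mem_inf.mpr ⟨hmem1 k', Subring.mul_mem _ (hcfix h k') huL⟩⟩ with hd
      have hdsum : ∑ k' ∈ t, d k' • v k' = 0 := by
        apply Subtype.ext
        calc ((∑ k' ∈ t, d k' • v k' : ↥(F.oneSubmodule (fixedSubring G))) : K)
            = ∑ k' ∈ t, ((d k' • v k' : ↥(F.oneSubmodule (fixedSubring G))) : K) :=
              AddSubmonoidClass.coe_finset_sum _ _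
          _ = ∑ k' ∈ t, (F.component h ((g k' : K)) * (B k' : K)) * u :=
              Finset.sum_congr rfl fun k' _ => by
                show (F.component h ((g k' : K)) * u) * (B k' : K) = _
                ring
          _ = (∑ k' ∈ t, F.component h ((g k' : K)) * (B k' : K)) * u := by
              rw [Finset.sum_mul]
          _ = 0 := by rw [hcomp h, zero_mul]
      have hdz := linearIndependent_iff'.mp hli_v t d hdsum j hjt
      have hone : F.component h ((g j : K)) * u = 0 := congrArg Subtype.val hdz
      rw [hju] at hone
      exact F.zero_ne_one hone.symm
    refine Subtype.ext ?_
    show ((g i : K)) = (0 : K)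
    obtain ⟨s', hs'1, _⟩ := F.exists_sum_component ((g i : K))
    rw [hs'1]
    calc ∑ h ∈ s', F.component h ((g i : K)) = ∑ h ∈ s', (0 : K) :=
          Finset.sum_congr rfl fun h _ => hczero h i hi
      _ = 0 := Finset.sum_const_zero
  have hsp_w : ⊤ ≤ Submodule.span ↥(fixedSubring G) (Set.range w) := by
    intro z _
    have hz2 : (z : K) ∈ fixedSubring (F.inertia G) := z.2
    have hcompfix : ∀ h : H, F.component h (z : K) ∈ fixedSubring (F.inertia G) := by
      intro h σ hσ
      rw [← F.component_aut σ (hG σ hσ.1) h, hz2 σ hσ]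
    have hxh : ∀ h : H,
        (⟨F.component h (z : K), hcompfix h⟩ : ↥Wsub) ∈
          Submodule.span ↥(fixedSubring G) (Set.range w) := by
      intro h
      by_cases h0 : F.component h (z : K) = 0
      · have he0 : (⟨F.component h (z : K), hcompfix h⟩ : ↥Wsub) = 0 := Subtype.ext h0
        rw [he0]
        exact Submodule.zero_mem _
      · obtain ⟨y, hy, hy0, hyL⟩ := F.exists_fixed_homogeneous G hG (F.component_mem h _) h0
          (fun σ hσ => hcompfix h σ hσ)
        obtain ⟨u, hu, hyu⟩ := F.inv_mem hy hy0
        have hamem : F.component h (z : K) * u ∈ F.oneComponent := by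
          have := F.mul_mem (F.component_mem h ((z : K))) hu
          rw [mul_inv_cancel] at this
          exact F.mem_oneComponent.mpr this
        set a : ↥F.oneComponent := ⟨F.component h (z : K) * u, hamem⟩ with haa
        have hcoef : ∀ i : Fin n, ((B.repr a i : ↥F.oneComponent) : K) * y ∈ fixedSubring G :=
          fun i => Subring.mul_mem _ ((hE _).mp (B.repr a i).2) hyL
        have h6 : ((∑ i : Fin n, B.repr a i • B i : ↥F.oneComponent) : K) =
            F.component h (z : K) * u := congrArg Subtype.val (B.sum_repr a)
        have hkey : (⟨F.component h (z : K), hcompfix h⟩ : ↥Wsub) =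
            ∑ i : Fin n, (⟨_, hcoef i⟩ : ↥(fixedSubring G)) • w i := by
          apply Subtype.ext
          calc F.component h (z : K)
              = (F.component h (z : K) * u) * y := by
                rw [mul_assoc, mul_comm u y, hyu, mul_one]
            _ = ((∑ i : Fin n, B.repr a i • B i : ↥F.oneComponent) : K) * y := by rw [← h6]
            _ = (∑ i : Fin n, ((B.repr a i • B i : ↥F.oneComponent) : K)) * y := by
                rw [AddSubmonoidClass.coe_finset_sum]
            _ = ∑ i : Fin n, (((B.repr a i : ↥F.oneComponent) : K) * y) * (B i : K) := by
                rw [Finset.sum_mul]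
                exact Finset.sum_congr rfl fun i _ => by
                  show ((B.repr a i : ↥F.oneComponent) : K) * (B i : K) * y = _
                  ring
            _ = ∑ i : Fin n, ((((⟨_, hcoef i⟩ : ↥(fixedSubring G)) • w i : ↥Wsub)) : K) :=
                Finset.sum_congr rfl fun i _ => rfl
            _ = ((∑ i : Fin n, (⟨_, hcoef i⟩ : ↥(fixedSubring G)) • w i : ↥Wsub) : K) :=
                (AddSubmonoidClass.coe_finset_sum _ _).symm
        rw [hkey]
        exact Submodule.sum_mem _ fun i _ => Submodule.smul_mem _ _
          (Submodule.subset_span ⟨i, rfl⟩)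
    obtain ⟨s', hs'1, _⟩ := F.exists_sum_component ((z : K))
    have hztot : z = ∑ h ∈ s', (⟨F.component h (z : K), hcompfix h⟩ : ↥Wsub) := by
      apply Subtype.ext
      rw [AddSubmonoidClass.coe_finset_sum]
      exact hs'1
    rw [hztot]
    exact Submodule.sum_mem _ fun h _ => hxh h
  set bw : Module.Basis (Fin n) ↥(fixedSubring G) ↥Wsub := Module.Basis.mk hli_w hsp_w with hbw
  have hrank_w : Module.rank ↥(fixedSubring G) ↥Wsub = n := by
    rw [rank_eq_card_basis bw, Fintype.card_fin]
  refine ⟨fun σ hσ x hx => hG σ hσ 1 x hx, fun x _ hx => hx, hrank3,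
    fun x hx σ hσ => hσ.2 x hx, ?_, ?_, ?_⟩
  · intro h
    constructor
    · rintro ⟨x, hx, hx0, hxI⟩
      exact F.exists_fixed_homogeneous G hG hx hx0 (fun σ hσ => hxI σ hσ)
    · rintro ⟨x, hx, hx0, hxL⟩
      exact ⟨x, hx, hx0, fun σ hσ => hxL σ hσ.1⟩
  · rw [hrank_w, hrank_v]
  · intro x hx
    obtain ⟨s', hs'1, _⟩ := F.exists_sum_component x
    rw [hs'1]
    refine Subring.sum_mem _ fun h _ => ?_
    by_cases h0 : F.component h x = 0
    · rw [h0]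
      exact Subring.zero_mem _
    · have hcfix : ∀ σ ∈ F.inertia G, σ (F.component h x) = F.component h x := fun σ hσ => by
        rw [← F.component_aut σ (hG σ hσ.1) h, hx σ hσ]
      obtain ⟨y, hy, hy0, hyL⟩ := F.exists_fixed_homogeneous G hG (F.component_mem h x) h0 hcfix
      obtain ⟨u, hu, hyu⟩ := F.inv_mem hy hy0
      have hmem1 : F.component h x * u ∈ F.oneComponent := by
        have := F.mul_mem (F.component_mem h x) hu
        rw [mul_inv_cancel] at this
        exact F.mem_oneComponent.mpr this
      have hxhy : F.component h x = (F.component h x * u) * y := by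
        rw [mul_assoc, mul_comm u y, hyu, mul_one]
      rw [hxhy]
      exact Subring.mul_mem _
        (Subring.subset_closure (Or.inl hmem1))
        (Subring.subset_closure (Or.inr hyL))
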